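/- Marginalization of the filtering jump update. Let d = d₁ + d₂ and write x = (x', x'') ∈ ℤ^{d₁} × ℤ^{d₂}. Let 𝒪_k be a nonempty finite set of reaction indices, with stoichiometric vectors ν_j = (ν_j', ν_j'') ∈ ℤ^{d₁} × ℤ^{d₂} and nonnegative propensities a_j : ℤ^d → ℝ for j ∈ 𝒪_k. Let ρ⁻ : ℤ^d → ℝ be nonnegative with (ρ⁻(x))_x summable and (a_j(x)ρ⁻(x))_x summable for each j ∈ 𝒪_k. Define the jump update ρ(x) := (1/|𝒪_k|) Σ_{j∈𝒪_k} a_j(x−ν_j) ρ⁻(x−ν_j), the marginals ρ̃⁻(x') := Σ_{x''∈ℤ^{d₂}} ρ⁻((x',x'')) and ρ̃(x') := Σ_{x''∈ℤ^{d₂}} ρ((x',x'')), and ã_j(x') := (Σ_{x''} a_j((x',x'')) ρ⁻((x',x''))) / ρ̃⁻(x') if ρ̃⁻(x') > 0 and ã_j(x') := 0 otherwise. Then for every x' ∈ ℤ^{d₁}: ρ̃(x') = (1/|𝒪_k|) Σ_{j∈𝒪_k} ã_j(x'−ν_j') ρ̃⁻(x'−ν_j'). -/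
import Mathlib


open scoped BigOperators

/-- The filtered Markovian projection propensity at a fixed time:
`ã(x') = (Σ_{x''} a (x',x'') ρ⁻((x',x''))) / ρ̃⁻(x')` when `ρ̃⁻(x') > 0`, else `0`. -/
noncomputable def jumpProjectedPropensity {σ τ : Type*} (a : σ × τ → ℝ)
    (ρ : σ × τ → ℝ) (ρm : σ → ℝ) (x' : σ) : ℝ :=
  if 0 < ρm x' then (∑' x'' : τ, a (x', x'') * ρ (x', x'')) / ρm x' else 0

/-- **Marginalization of the filtering jump update.**
If the unnormalized conditional PMF is updated at an observation jump by
`ρ(x) = (1/|𝒪_k|) Σ_{j∈𝒪_k} a_j(x−ν_j) ρ⁻(x−ν_j)`, then its marginal satisfies the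
corresponding jump update of the projected network with propensities `ã_j` and
stoichiometric vectors `ν_j'`. -/
theorem marginalization_of_jump_update (d₁ d₂ : ℕ) {ι : Type*}
    (𝒪k : Finset ι) (h𝒪k : 𝒪k.Nonempty)
    (ν : ι → (Fin d₁ → ℤ) × (Fin d₂ → ℤ))
    (a : ι → (Fin d₁ → ℤ) × (Fin d₂ → ℤ) → ℝ)
    (ha : ∀ j ∈ 𝒪k, ∀ x, 0 ≤ a j x)
    (ρminus : (Fin d₁ → ℤ) × (Fin d₂ → ℤ) → ℝ)
    (hρminus : ∀ x, 0 ≤ ρminus x)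
    (hsum : Summable ρminus)
    (hsum' : ∀ j ∈ 𝒪k, Summable fun x => a j x * ρminus x)
    (ρ : (Fin d₁ → ℤ) × (Fin d₂ → ℤ) → ℝ)
    (hρ : ∀ x, ρ x = (𝒪k.card : ℝ)⁻¹ * ∑ j ∈ 𝒪k, a j (x - ν j) * ρminus (x - ν j))
    (ρmMinus : (Fin d₁ → ℤ) → ℝ)
    (hρmMinus : ∀ x', ρmMinus x' = ∑' x'' : Fin d₂ → ℤ, ρminus (x', x''))
    (ρm : (Fin d₁ → ℤ) → ℝ)
    (hρm : ∀ x', ρm x' = ∑' x'' : Fin d₂ → ℤ, ρ (x', x'')) :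
    ∀ x' : Fin d₁ → ℤ,
      ρm x' = (𝒪k.card : ℝ)⁻¹ * ∑ j ∈ 𝒪k,
        jumpProjectedPropensity (a j) ρminus ρmMinus (x' - (ν j).1)
          * ρmMinus (x' - (ν j).1) := by
  intro x'
  have key : ∀ j ∈ 𝒪k,
      jumpProjectedPropensity (a j) ρminus ρmMinus (x' - (ν j).1)
          * ρmMinus (x' - (ν j).1)
        = ∑' x'' : Fin d₂ → ℤ, a j (x' - (ν j).1, x'') * ρminus (x' - (ν j).1, x'') := by
    intro j hj
    set y' := x' - (ν j).1
    unfold jumpProjectedPropensity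
    split_ifs with h
    · exact div_mul_cancel₀ _ (ne_of_gt h)
    · have hsec : Summable fun x'' : Fin d₂ → ℤ => ρminus (y', x'') := hsum.prod_factor y'
      have h0 : ρmMinus y' = 0 := by
        have hge : 0 ≤ ρmMinus y' := by
          rw [hρmMinus]; exact tsum_nonneg fun _ => hρminus _
        linarith [lt_or_eq_of_le hge, not_lt.mp h]
      have hz : ∀ x'' : Fin d₂ → ℤ, ρminus (y', x'') = 0 := by
        intro x''
        have hle : ρminus (y', x'') ≤ ρmMinus y' := by
          rw [hρmMinus]
          exact Summable.le_tsum hsec x'' fun _ _ => hρminus _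
        have := hρminus (y', x'')
        linarith
      have : (∑' x'' : Fin d₂ → ℤ, a j (y', x'') * ρminus (y', x'')) = 0 := by
        simp [hz]
      rw [this, zero_mul]
  have hsummand : ∀ j ∈ 𝒪k,
      Summable fun x'' : Fin d₂ → ℤ =>
        a j ((x', x'') - ν j) * ρminus ((x', x'') - ν j) := by
    intro j hj
    have h1 : Summable fun x'' : Fin d₂ → ℤ =>
        a j (x' - (ν j).1, x'') * ρminus (x' - (ν j).1, x'') :=
      (hsum' j hj).prod_factor (x' - (ν j).1)
    exact h1.comp_injective (Equiv.subRight (ν j).2).injective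
  calc ρm x' = ∑' x'' : Fin d₂ → ℤ, ρ (x', x'') := hρm x'
    _ = ∑' x'' : Fin d₂ → ℤ, (𝒪k.card : ℝ)⁻¹ *
          ∑ j ∈ 𝒪k, a j ((x', x'') - ν j) * ρminus ((x', x'') - ν j) := by
        simp only [hρ]
    _ = (𝒪k.card : ℝ)⁻¹ * ∑' x'' : Fin d₂ → ℤ,
          ∑ j ∈ 𝒪k, a j ((x', x'') - ν j) * ρminus ((x', x'') - ν j) := tsum_mul_left
    _ = (𝒪k.card : ℝ)⁻¹ * ∑ j ∈ 𝒪k, ∑' x'' : Fin d₂ → ℤ,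
          a j ((x', x'') - ν j) * ρminus ((x', x'') - ν j) := by
        rw [Summable.tsum_finsetSum hsummand]
    _ = (𝒪k.card : ℝ)⁻¹ * ∑ j ∈ 𝒪k,
          jumpProjectedPropensity (a j) ρminus ρmMinus (x' - (ν j).1)
            * ρmMinus (x' - (ν j).1) := by
        congr 1
        refine Finset.sum_congr rfl fun j hj => ?_
        rw [key j hj]
        have : ∀ x'' : Fin d₂ → ℤ, ((x', x'') - ν j) = (x' - (ν j).1, x'' - (ν j).2) :=
          fun _ => rfl
        simp only [this]
        exact (Equiv.subRight (ν j).2).tsum_eq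
          (fun z => a j (x' - (ν j).1, z) * ρminus (x' - (ν j).1, z))
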